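/- Let r ∈ ℝ and let g : [r,∞) → ℝ_{>0} be decreasing and continuously differentiable with −g'(x) ≤ K·g(x)/x for some constant K. Let A : [r,∞) → ℝ satisfy A(x) = c·x + o(x) for some c > 0, and suppose A is the partial-sum function of a nonnegative arithmetic sequence a_m (A(X) = ∑_{r ≤ m ≤ X} a_m). Then ∑_{r ≤ m ≤ X} a_m·g(m) = c·∫_r^X g(t)dt + o(∫_r^X g(t)dt) + O(1) as X → ∞. -/

import Mathlib

open Filter Set
open MeasureTheory intervalIntegral in

/-- Abel-summation asymptotics: if `g` is positive, decreasing, continuously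
differentiable with `-g'(x) ≤ K·g(x)/x` on `[r,∞)`, and `A(X) = ∑_{r ≤ m ≤ X} a m`
satisfies `A(X) = c·X + o(X)` with the `a m` nonnegative, then
`∑_{r ≤ m ≤ X} a m · g m = c·∫_r^X g + o(∫_r^X g) + O(1)` as `X → ∞`. -/
theorem stmt_9 (r : ℝ) (g g' : ℝ → ℝ) (K c : ℝ) (hc : 0 < c)
    (hgpos : ∀ x ∈ Set.Ici r, 0 < g x)
    (hgdec : AntitoneOn g (Set.Ici r))
    (hderiv : ∀ x ∈ Set.Ici r, HasDerivAt g (g' x) x)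
    (hg'cont : ContinuousOn g' (Set.Ici r))
    (hg'bound : ∀ x ∈ Set.Ici r, -g' x ≤ K * g x / x)
    (a : ℕ → ℝ) (ha : ∀ m, 0 ≤ a m)
    (A : ℝ → ℝ) (hA : ∀ X : ℝ, A X = ∑ m ∈ Finset.Icc ⌈r⌉₊ ⌊X⌋₊, a m)
    (hAasymp : (fun X => A X - c * X) =o[atTop] (fun X : ℝ => X)) :
    ∃ e₁ e₂ : ℝ → ℝ,
      (∀ X : ℝ, r ≤ X →
        ∑ m ∈ Finset.Icc ⌈r⌉₊ ⌊X⌋₊, a m * g m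
          = c * (∫ t in r..X, g t) + e₁ X + e₂ X) ∧
      e₁ =o[atTop] (fun X : ℝ => ∫ t in r..X, g t) ∧
      e₂ =O[atTop] (fun _ : ℝ => (1 : ℝ)) := by
  classical
  set T : ℝ → ℝ := fun X => ∑ m ∈ Finset.Icc ⌈r⌉₊ ⌊X⌋₊, a m * g m with hT
  set I : ℝ → ℝ := fun X => ∫ t in r..X, g t with hI
  set E : ℝ → ℝ := fun t => A t - c * t with hE
  set x₀ : ℝ := max r 0 + 1 with hx₀def
  have hrx₀ : r < x₀ := lt_of_le_of_lt (le_max_left r 0) (lt_add_one _)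
  have hx₀pos : (0:ℝ) < x₀ := lt_of_le_of_lt (le_max_right r 0) (lt_add_one _)
  have hx₀r : x₀ ∈ Set.Ici r := le_of_lt hrx₀
  have hgcont : ContinuousOn g (Set.Ici r) :=
    fun x hx => (hderiv x hx).continuousAt.continuousWithinAt
  have hgint : ∀ p q : ℝ, r ≤ p → r ≤ q → IntervalIntegrable g Real.measureSpace.volume p q := by
    intro p q hp hq
    refine (hgcont.mono ?_).intervalIntegrable
    intro x hx
    exact le_trans (le_inf hp hq) hx.1
  have hg'int : ∀ p q : ℝ, r ≤ p → r ≤ q → IntervalIntegrable g' Real.measureSpace.volume p q := by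
    intro p q hp hq
    refine (hg'cont.mono ?_).intervalIntegrable
    intro x hx
    exact le_trans (le_inf hp hq) hx.1
  have hg'np : ∀ x ∈ Set.Ici r, g' x ≤ 0 := by
    intro x hx
    have h := ((hderiv x hx).hasDerivWithinAt (s := Set.Ioi x))
    rw [hasDerivWithinAt_iff_tendsto_slope] at h
    have hdiff : Set.Ioi x \ {x} = Set.Ioi x :=
      Set.diff_singleton_eq_self (by simp : x ∉ Set.Ioi x)
    rw [hdiff] at h
    have hne : (nhdsWithin x (Set.Ioi x)).NeBot := nhdsGT_neBot x
    refine le_of_tendsto h ?_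
    filter_upwards [self_mem_nhdsWithin] with y hy
    have hyx : x < y := hy
    rw [slope_def_field]
    have : g y ≤ g x := hgdec hx (le_trans hx hyx.le) hyx.le
    exact div_nonpos_of_nonpos_of_nonneg (by linarith) (by linarith)
  have hK : 0 ≤ K := by
    by_contra hKneg
    push_neg at hKneg
    have h1 := hg'np x₀ hx₀r
    have h2 := hg'bound x₀ hx₀r
    have h3 : K * g x₀ / x₀ < 0 :=
      div_neg_of_neg_of_pos (mul_neg_of_neg_of_pos hKneg (hgpos x₀ hx₀r)) hx₀pos
    linarith
  have hIsplit : ∀ p q : ℝ, r ≤ p → r ≤ q → I q = I p + ∫ t in p..q, g t := by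
    intro p q hp hq
    have := intervalIntegral.integral_add_adjacent_intervals
      (hgint r p le_rfl hp) (hgint p q hp hq)
    simp only [hI]
    linarith
  have hImono : ∀ p q : ℝ, r ≤ p → p ≤ q → I p ≤ I q := by
    intro p q hp hq
    have hs := hIsplit p q hp (le_trans hp hq)
    have hnn : 0 ≤ ∫ t in p..q, g t := by
      refine intervalIntegral.integral_nonneg hq ?_
      intro u hu
      exact (hgpos u (le_trans hp hu.1)).le
    linarith
  have hAnn : ∀ t : ℝ, 0 ≤ A t := by
    intro t
    rw [hA]
    exact Finset.sum_nonneg fun m _ => ha m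
  have hAmono : ∀ s t : ℝ, s ≤ t → A s ≤ A t := by
    intro s t hst
    rw [hA, hA]
    refine Finset.sum_le_sum_of_subset_of_nonneg ?_ (fun m _ _ => ha m)
    exact Finset.Icc_subset_Icc le_rfl (Nat.floor_mono hst)
  have hEbound : ∀ q : ℝ, ∀ t ∈ Set.Icc (0:ℝ) q, |E t| ≤ A q + |c| * q := by
    intro q t ht
    have h1 : |A t| = A t := abs_of_nonneg (hAnn t)
    have h2 : A t ≤ A q := hAmono t q ht.2
    have h3 : |c * t| ≤ |c| * q := by
      rw [abs_mul]
      exact mul_le_mul_of_nonneg_left (by rw [abs_of_nonneg ht.1]; exact ht.2) (abs_nonneg c)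
    calc |E t| ≤ |A t| + |c * t| := abs_sub (A t) (c * t)
    _ ≤ A q + |c| * q := by rw [h1]; exact add_le_add h2 h3
  have hEmeas : Measurable E := by
    have hAf : A = (fun n : ℕ => ∑ m ∈ Finset.Icc ⌈r⌉₊ n, a m) ∘ Nat.floor := by
      funext X; exact hA X
    have hAm : Measurable A := by
      rw [hAf]; exact measurable_from_nat.comp Nat.measurable_floor
    exact hAm.sub (measurable_const.mul measurable_id)
  have hg'Emul : ∀ p q : ℝ, x₀ ≤ p →
      MeasureTheory.IntegrableOn (fun t => g' t * E t) (Set.Ioc p q) := by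
    intro p q hp
    rcases le_or_gt q p with hqp | hpq
    · rw [Set.Ioc_eq_empty (not_lt.mpr hqp)]
      exact MeasureTheory.integrableOn_empty
    · have hrp : r ≤ p := le_trans hrx₀.le hp
      have hrq : r ≤ q := le_trans hrp hpq.le
      have hmaj : MeasureTheory.IntegrableOn (fun t => |g' t| * (A q + |c| * q))
          (Set.Ioc p q) := ((hg'int p q hrp hrq).1).norm.mul_const _
      refine MeasureTheory.Integrable.mono' hmaj ?_ ?_
      · have h1 : MeasureTheory.AEStronglyMeasurable g'
            (MeasureTheory.volume.restrict (Set.Ioc p q)) := by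
          exact ContinuousOn.aestronglyMeasurable
            (hg'cont.mono (fun t ht => le_trans hrp ht.1.le)) measurableSet_Ioc
        exact h1.mul (hEmeas.aestronglyMeasurable.restrict)
      · rw [MeasureTheory.ae_restrict_iff' measurableSet_Ioc]
        filter_upwards with t ht
        have ht0 : t ∈ Set.Icc (0:ℝ) q := ⟨(lt_of_lt_of_le (lt_of_lt_of_le hx₀pos hp) ht.1.le).le, ht.2⟩
        rw [Real.norm_eq_abs, abs_mul]
        exact mul_le_mul_of_nonneg_left (hEbound q t ht0) (abs_nonneg _)
  have hftc : ∀ p q : ℝ, r ≤ p → p ≤ q → ∫ t in p..q, g' t = g q - g p := by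
    intro p q hp hpq
    refine intervalIntegral.integral_eq_sub_of_hasDerivAt ?_ (hg'int p q hp (le_trans hp hpq))
    intro t ht
    rw [Set.uIcc_of_le hpq] at ht
    exact hderiv t (le_trans hp ht.1)
  have hparts : ∀ X : ℝ, x₀ ≤ X →
      ∫ t in Set.Ioc x₀ X, t * g' t = X * g X - x₀ * g x₀ - ∫ t in x₀..X, g t := by
    intro X hX
    have hrX : r ≤ X := le_trans hrx₀.le hX
    have h1 : ∀ t ∈ Set.uIcc x₀ X, HasDerivAt (fun u => u * g u) (g t + t * g' t) t := by
      intro t ht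
      rw [Set.uIcc_of_le hX] at ht
      have := (hasDerivAt_id' t).mul (hderiv t (le_trans hrx₀.le ht.1))
      simpa [add_comm, one_mul, Pi.mul_def] using this
    have hint2 : IntervalIntegrable (fun t => t * g' t) MeasureTheory.volume x₀ X := by
      refine ContinuousOn.intervalIntegrable ?_
      refine continuousOn_id.mul (hg'cont.mono ?_)
      intro u hu
      rw [Set.uIcc_of_le hX] at hu
      exact le_trans hrx₀.le hu.1
    have hint : IntervalIntegrable (fun t => g t + t * g' t) MeasureTheory.volume x₀ X :=
      (hgint x₀ X hrx₀.le hrX).add hint2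
    have h2 := intervalIntegral.integral_eq_sub_of_hasDerivAt h1 hint
    have h3 : ∫ t in x₀..X, (g t + t * g' t) =
        (∫ t in x₀..X, g t) + ∫ t in x₀..X, t * g' t :=
      intervalIntegral.integral_add (hgint x₀ X hrx₀.le hrX) hint2
    rw [← intervalIntegral.integral_of_le hX]
    linarith
  have habel : ∀ X : ℝ, x₀ ≤ X →
      T X = T x₀ + (A X * g X - A x₀ * g x₀ - ∫ t in Set.Ioc x₀ X, g' t * A t) := by
    intro X hX
    have hrX : r ≤ X := le_trans hrx₀.le hX
    set a' : ℕ → ℝ := fun k => if ⌈r⌉₊ ≤ k then a k else 0 with ha'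
    have hfilter : ∀ n : ℕ, (Finset.Icc 0 n).filter (fun k => ⌈r⌉₊ ≤ k) = Finset.Icc ⌈r⌉₊ n := by
      intro n
      ext k
      simp only [Finset.mem_filter, Finset.mem_Icc]
      omega
    have hS : ∀ n : ℕ, ∑ k ∈ Finset.Icc 0 n, a' k = ∑ k ∈ Finset.Icc ⌈r⌉₊ n, a k := by
      intro n
      rw [← Finset.sum_filter, hfilter]
    have hSg : ∀ n : ℕ, ∑ k ∈ Finset.Icc 0 n, a' k * g k
        = ∑ k ∈ Finset.Icc ⌈r⌉₊ n, a k * g k := by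
      intro n
      simp only [ha', ite_mul, zero_mul]
      rw [← Finset.sum_filter, hfilter]
    have hdiff : ∀ t ∈ Set.Icc x₀ X, DifferentiableAt ℝ g t :=
      fun t ht => (hderiv t (le_trans hrx₀.le ht.1)).differentiableAt
    have hderint : MeasureTheory.IntegrableOn (deriv g) (Set.Icc x₀ X) := by
      refine MeasureTheory.IntegrableOn.congr_fun
        (ContinuousOn.integrableOn_Icc (hg'cont.mono (fun t ht => le_trans hrx₀.le ht.1)))
        ?_ measurableSet_Icc
      intro t ht
      exact ((hderiv t (le_trans hrx₀.le ht.1)).deriv).symm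
    have habel0 := sum_mul_eq_sub_sub_integral_mul a' hx₀pos.le hX
      hdiff hderint
    have hint_congr : ∫ t in Set.Ioc x₀ X, deriv g t * (∑ k ∈ Finset.Icc 0 ⌊t⌋₊, a' k)
        = ∫ t in Set.Ioc x₀ X, g' t * A t := by
      refine MeasureTheory.setIntegral_congr_fun measurableSet_Ioc ?_
      intro t ht
      have htr : t ∈ Set.Ici r := le_trans hrx₀.le ht.1.le
      show deriv g t * (∑ k ∈ Finset.Icc 0 ⌊t⌋₊, a' k) = g' t * A t
      rw [hS ⌊t⌋₊, ← hA t, (hderiv t htr).deriv]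
    have hdecomp : T X = T x₀ + ∑ k ∈ Finset.Ioc ⌊x₀⌋₊ ⌊X⌋₊, g k * a' k := by
      have hTX : T X = ∑ k ∈ Finset.Icc 0 ⌊X⌋₊, a' k * g k := (hSg ⌊X⌋₊).symm
      have hTx : T x₀ = ∑ k ∈ Finset.Icc 0 ⌊x₀⌋₊, a' k * g k := (hSg ⌊x₀⌋₊).symm
      have hun : Finset.Icc 0 ⌊x₀⌋₊ ∪ Finset.Ioc ⌊x₀⌋₊ ⌊X⌋₊ = Finset.Icc 0 ⌊X⌋₊ := by
        ext k
        simp only [Finset.mem_union, Finset.mem_Icc, Finset.mem_Ioc]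
        have := Nat.floor_mono hX
        omega
      have hdisj : Disjoint (Finset.Icc 0 ⌊x₀⌋₊) (Finset.Ioc ⌊x₀⌋₊ ⌊X⌋₊) := by
        refine Finset.disjoint_left.mpr ?_
        intro k hk hk'
        simp only [Finset.mem_Icc] at hk
        simp only [Finset.mem_Ioc] at hk'
        omega
      rw [hTX, hTx, ← hun, Finset.sum_union hdisj]
      congr 1
      exact Finset.sum_congr rfl fun k _ => mul_comm _ _
    rw [hdecomp, habel0, hS ⌊X⌋₊, hS ⌊x₀⌋₊, ← hA X, ← hA x₀, hint_congr]
    ring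
  set F : ℝ → ℝ := fun X => E X * g X - ∫ t in Set.Ioc x₀ X, g' t * E t with hF
  set K₀ : ℝ := T x₀ - c * I x₀ - E x₀ * g x₀ with hK₀
  have hkey : ∀ X : ℝ, x₀ ≤ X → T X - c * I X = K₀ + F X := by
    intro X hX
    have hrX : r ≤ X := le_trans hrx₀.le hX
    have h1 := habel X hX
    have h2 := hparts X hX
    have h3 := hIsplit x₀ X hrx₀.le hrX
    have hinttg : MeasureTheory.IntegrableOn (fun t => t * g' t) (Set.Ioc x₀ X) := by
      refine (ContinuousOn.integrableOn_Icc ?_).mono_set Set.Ioc_subset_Icc_self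
      exact continuousOn_id.mul (hg'cont.mono (fun t ht => le_trans hrx₀.le ht.1))
    have hintA : MeasureTheory.IntegrableOn (fun t => g' t * A t) (Set.Ioc x₀ X) := by
      refine MeasureTheory.IntegrableOn.congr_fun
        ((hg'Emul x₀ X le_rfl).add (hinttg.const_mul c)) ?_ measurableSet_Ioc
      intro t ht
      show ((fun t => g' t * E t) + fun t => c * (t * g' t)) t = g' t * A t
      simp only [Pi.add_apply, hE]
      ring
    have h4 : (∫ t in Set.Ioc x₀ X, g' t * E t) =
        (∫ t in Set.Ioc x₀ X, g' t * A t) - c * ∫ t in Set.Ioc x₀ X, t * g' t := by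
      rw [← MeasureTheory.integral_const_mul, ← MeasureTheory.integral_sub hintA
        (hinttg.const_mul c)]
      refine MeasureTheory.setIntegral_congr_fun measurableSet_Ioc ?_
      intro t ht
      show g' t * E t = g' t * A t - c * (t * g' t)
      simp only [hE]
      ring
    have h3' : c * I X = c * I x₀ + c * (X * g X) - c * (x₀ * g x₀)
        - c * ∫ t in Set.Ioc x₀ X, t * g' t := by
      rw [h3]
      have : (∫ t in x₀..X, g t) = X * g X - x₀ * g x₀ - ∫ t in Set.Ioc x₀ X, t * g' t := by
        linarith
      rw [this]
      ring
    simp only [hK₀, hF, hE]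
    linear_combination h1 - h3' + h4
  have hXg : ∀ X : ℝ, x₀ ≤ X → X * g X ≤ x₀ * g x₀ + ∫ t in x₀..X, g t := by
    intro X hX
    have h2 := hparts X hX
    have hnp : (∫ t in Set.Ioc x₀ X, t * g' t) ≤ 0 := by
      refine MeasureTheory.setIntegral_nonpos measurableSet_Ioc ?_
      intro t ht
      exact mul_nonpos_of_nonneg_of_nonpos (lt_trans hx₀pos ht.1).le
        (hg'np t (le_trans hrx₀.le ht.1.le))
    linarith
  have hBnd : ∀ δ C₀ : ℝ, 0 ≤ δ → 0 ≤ C₀ → ∀ p X : ℝ, x₀ ≤ p → p ≤ X →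
      (∀ t ∈ Set.Ioc p X, |E t| ≤ C₀ + δ * t) →
      (∫ t in Set.Ioc p X, |g' t * E t|) ≤ C₀ * g p + δ * K * ∫ t in p..X, g t := by
    intro δ C₀ hδ hC₀ p X hp hpX hEb
    have hrp : r ≤ p := le_trans hrx₀.le hp
    have hrX : r ≤ X := le_trans hrp hpX
    have hsub : Set.Icc p X ⊆ Set.Ici r := fun t ht => le_trans hrp ht.1
    have hmajcont : ContinuousOn (fun t => C₀ * (-g' t) + δ * (K * g t)) (Set.Icc p X) :=
      (continuousOn_const.mul (hg'cont.mono hsub).neg).add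
        (continuousOn_const.mul (continuousOn_const.mul (hgcont.mono hsub)))
    have hmajint : MeasureTheory.IntegrableOn (fun t => C₀ * (-g' t) + δ * (K * g t))
        (Set.Ioc p X) := (hmajcont.integrableOn_Icc).mono_set Set.Ioc_subset_Icc_self
    have hlhsint : MeasureTheory.IntegrableOn (fun t => |g' t * E t|) (Set.Ioc p X) :=
      (hg'Emul p X hp).abs
    have hmono : (∫ t in Set.Ioc p X, |g' t * E t|)
        ≤ ∫ t in Set.Ioc p X, (C₀ * (-g' t) + δ * (K * g t)) := by
      refine MeasureTheory.setIntegral_mono_on hlhsint hmajint measurableSet_Ioc ?_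
      intro t ht
      have ht0 : 0 < t := lt_of_le_of_lt (le_trans hx₀pos.le hp) ht.1
      have htr : t ∈ Set.Ici r := le_trans hrp ht.1.le
      have hg'le : 0 ≤ -g' t := neg_nonneg.2 (hg'np t htr)
      have h1 : |g' t * E t| = (-g' t) * |E t| := by
        rw [abs_mul, abs_of_nonpos (hg'np t htr)]
      have h2 : (-g' t) * |E t| ≤ (-g' t) * (C₀ + δ * t) :=
        mul_le_mul_of_nonneg_left (hEb t ht) hg'le
      have h3 : (-g' t) * t ≤ K * g t := by
        have hb := hg'bound t htr
        calc (-g' t) * t ≤ (K * g t / t) * t := mul_le_mul_of_nonneg_right hb ht0.le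
        _ = K * g t := div_mul_cancel₀ _ (ne_of_gt ht0)
      have h4 : δ * ((-g' t) * t) ≤ δ * (K * g t) := mul_le_mul_of_nonneg_left h3 hδ
      rw [h1]
      nlinarith [h2, h4]
    have hcomp : (∫ t in Set.Ioc p X, (C₀ * (-g' t) + δ * (K * g t)))
        = C₀ * (g p - g X) + δ * (K * ∫ t in p..X, g t) := by
      rw [← intervalIntegral.integral_of_le hpX]
      have i1 : IntervalIntegrable (fun t => C₀ * (-g' t)) MeasureTheory.volume p X :=
        ((hg'int p X hrp hrX).neg).const_mul C₀
      have i2 : IntervalIntegrable (fun t => δ * (K * g t)) MeasureTheory.volume p X :=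
        ((hgint p X hrp hrX).const_mul K).const_mul δ
      rw [intervalIntegral.integral_add i1 i2, intervalIntegral.integral_const_mul,
        intervalIntegral.integral_const_mul, intervalIntegral.integral_const_mul,
        intervalIntegral.integral_neg, hftc p X hrp hpX]
      ring
    have hgX : 0 < g X := hgpos X hrX
    have hgp : 0 < g p := hgpos p hrp
    nlinarith [hmono, hcomp, mul_nonneg hC₀ hgX.le]
  have hsplitI : ∀ p X : ℝ, x₀ ≤ p → p ≤ X →
      (∫ t in Set.Ioc x₀ X, |g' t * E t|) =
        (∫ t in Set.Ioc x₀ p, |g' t * E t|) + ∫ t in Set.Ioc p X, |g' t * E t| := by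
    intro p X hp hpX
    have hu : Set.Ioc x₀ p ∪ Set.Ioc p X = Set.Ioc x₀ X := Set.Ioc_union_Ioc_eq_Ioc hp hpX
    rw [← hu, MeasureTheory.setIntegral_union (Set.Ioc_disjoint_Ioc_of_le le_rfl) measurableSet_Ioc
      ((hg'Emul x₀ p le_rfl).abs) ((hg'Emul p X hp).abs)]
  have hFbd : ∀ X : ℝ, x₀ ≤ X → |F X| ≤ |E X| * g X + ∫ t in Set.Ioc x₀ X, |g' t * E t| := by
    intro X hX
    have hrX : r ≤ X := le_trans hrx₀.le hX
    have h1 : |F X| ≤ |E X * g X| + |∫ t in Set.Ioc x₀ X, g' t * E t| := abs_sub _ _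
    have h2 : |∫ t in Set.Ioc x₀ X, g' t * E t| ≤ ∫ t in Set.Ioc x₀ X, |g' t * E t| := by
      simp only [abs_mul]
      have := MeasureTheory.norm_integral_le_integral_norm (f := fun t => g' t * E t)
        (μ := MeasureTheory.volume.restrict (Set.Ioc x₀ X))
      simpa [Real.norm_eq_abs, abs_mul] using this
    have h3 : |E X * g X| = |E X| * g X := by
      rw [abs_mul, abs_of_pos (hgpos X hrX)]
    linarith
  by_cases hbd : ∃ L : ℝ, ∀ X : ℝ, x₀ ≤ X → I X ≤ L
  · -- bounded-integral case
    obtain ⟨L, hL⟩ := hbd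
    refine ⟨fun _ => 0, fun X => T X - c * I X, fun X _ => by ring, ?_, ?_⟩
    · exact Asymptotics.isLittleO_zero _ _
    · have hev := hAasymp.def one_pos
      obtain ⟨T₀', hT₀'⟩ := eventually_atTop.mp hev
      set T₁ : ℝ := max T₀' x₀ with hT₁def
      have hT₁x₀ : x₀ ≤ T₁ := le_max_right _ _
      have hrT₁ : r ≤ T₁ := le_trans hrx₀.le hT₁x₀
      set C₀ : ℝ := A T₁ + |c| * T₁ with hC₀def
      have hT₁pos : 0 < T₁ := lt_of_lt_of_le hx₀pos hT₁x₀
      have hC₀nn : 0 ≤ C₀ :=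
        add_nonneg (hAnn _) (mul_nonneg (abs_nonneg _) hT₁pos.le)
      have hb1 : (∫ t in Set.Ioc x₀ T₁, |g' t * E t|)
          ≤ C₀ * g x₀ + 0 * K * ∫ t in x₀..T₁, g t := by
        refine hBnd 0 C₀ le_rfl hC₀nn x₀ T₁ le_rfl hT₁x₀ ?_
        intro t ht
        have ht0 : (0:ℝ) ≤ t := (lt_trans hx₀pos ht.1).le
        simpa using hEbound T₁ t ⟨ht0, ht.2⟩
      rw [Asymptotics.isBigO_iff]
      refine ⟨|K₀| + (x₀ * g x₀ + (L + |I x₀|)) + (C₀ * g x₀) + K * (L + |I T₁|), ?_⟩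
      filter_upwards [eventually_ge_atTop T₁] with X hX₁
      have hXx₀ : x₀ ≤ X := le_trans hT₁x₀ hX₁
      have hrX : r ≤ X := le_trans hrx₀.le hXx₀
      have hXpos : 0 < X := lt_of_lt_of_le hx₀pos hXx₀
      have hgX : 0 < g X := hgpos X hrX
      have hEX : |E X| ≤ X := by
        have := hT₀' X (le_trans (le_max_left _ _) hX₁)
        rw [Real.norm_eq_abs, Real.norm_eq_abs, abs_of_pos hXpos, one_mul] at this
        exact this
      have hb2 : (∫ t in Set.Ioc T₁ X, |g' t * E t|)
          ≤ 0 * g T₁ + 1 * K * ∫ t in T₁..X, g t := by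
        refine hBnd 1 0 zero_le_one le_rfl T₁ X hT₁x₀ hX₁ ?_
        intro t ht
        have htpos : 0 < t := lt_of_le_of_lt hT₁pos.le ht.1
        have := hT₀' t (le_trans (le_max_left _ _) ht.1.le)
        rw [Real.norm_eq_abs, Real.norm_eq_abs, abs_of_pos htpos, one_mul] at this
        linarith
      have hsp := hsplitI T₁ X hT₁x₀ hX₁
      have hFb := hFbd X hXx₀
      have hkey' := hkey X hXx₀
      have hXgb := hXg X hXx₀
      have hIs : (∫ t in x₀..X, g t) = I X - I x₀ := by
        linarith [hIsplit x₀ X hrx₀.le hrX]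
      have hIs2 : (∫ t in T₁..X, g t) = I X - I T₁ := by
        linarith [hIsplit T₁ X hrT₁ hrX]
      rw [hIs2] at hb2
      have hLX := hL X hXx₀
      have habs : |T X - c * I X| ≤ |K₀| + |F X| := by
        rw [hkey']
        exact abs_add_le _ _
      have hEXg : |E X| * g X ≤ X * g X := mul_le_mul_of_nonneg_right hEX hgX.le
      have hKle : K * (I X - I T₁) ≤ K * (L + |I T₁|) := by
        refine mul_le_mul_of_nonneg_left ?_ hK
        have := neg_le_abs (I T₁)
        linarith
      rw [Real.norm_eq_abs, norm_one, mul_one]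
      have habsIx₀ := neg_le_abs (I x₀)
      linarith [habs, hFb, hsp, hb1, hb2, hEXg, hXgb, hIs, hIs2, hLX, hKle, habsIx₀]
  · -- integral tends to infinity
    have hItop : Tendsto I atTop atTop := by
      push_neg at hbd
      rw [tendsto_atTop]
      intro b
      obtain ⟨X₁, hX₁, hbX₁⟩ := hbd b
      filter_upwards [eventually_ge_atTop X₁] with X hX
      exact le_of_lt (lt_of_lt_of_le hbX₁ (hImono X₁ X (le_trans hrx₀.le hX₁) hX))
    refine ⟨fun X => T X - c * I X, fun _ => 0, fun X _ => by ring, ?_, ?_⟩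
    · rw [Asymptotics.isLittleO_iff]
      intro ε hε
      set δ : ℝ := ε / (2 * (K + 1)) with hδdef
      have hK1 : (0:ℝ) < 2 * (K + 1) := by linarith
      have hδpos : 0 < δ := div_pos hε hK1
      have hδε : δ * (2 * (K + 1)) = ε := div_mul_cancel₀ ε (ne_of_gt hK1)
      have hev := hAasymp.def hδpos
      obtain ⟨T₀', hT₀'⟩ := eventually_atTop.mp hev
      set T₁ : ℝ := max T₀' x₀ with hT₁def
      have hT₁x₀ : x₀ ≤ T₁ := le_max_right _ _
      have hrT₁ : r ≤ T₁ := le_trans hrx₀.le hT₁x₀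
      set C₀ : ℝ := A T₁ + |c| * T₁ with hC₀def
      have hT₁pos : 0 < T₁ := lt_of_lt_of_le hx₀pos hT₁x₀
      have hC₀nn : 0 ≤ C₀ :=
        add_nonneg (hAnn _) (mul_nonneg (abs_nonneg _) hT₁pos.le)
      have hb1 : (∫ t in Set.Ioc x₀ T₁, |g' t * E t|)
          ≤ C₀ * g x₀ + 0 * K * ∫ t in x₀..T₁, g t := by
        refine hBnd 0 C₀ le_rfl hC₀nn x₀ T₁ le_rfl hT₁x₀ ?_
        intro t ht
        have ht0 : (0:ℝ) ≤ t := (lt_trans hx₀pos ht.1).le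
        simpa using hEbound T₁ t ⟨ht0, ht.2⟩
      set Cst : ℝ := |K₀| + δ * (x₀ * g x₀) + C₀ * g x₀ + δ * |I x₀| + δ * K * |I T₁|
        with hCstdef
      filter_upwards [eventually_ge_atTop T₁,
        hItop.eventually_ge_atTop (max 0 (2 * Cst / ε))] with X hX₁ hIX
      have hXx₀ : x₀ ≤ X := le_trans hT₁x₀ hX₁
      have hrX : r ≤ X := le_trans hrx₀.le hXx₀
      have hXpos : 0 < X := lt_of_lt_of_le hx₀pos hXx₀
      have hgX : 0 < g X := hgpos X hrX
      have hIX0 : 0 ≤ I X := le_trans (le_max_left _ _) hIX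
      have hIXC : 2 * Cst / ε ≤ I X := le_trans (le_max_right _ _) hIX
      have hCst : 2 * Cst ≤ I X * ε := (div_le_iff₀ hε).mp hIXC
      have hEX : |E X| ≤ δ * X := by
        have := hT₀' X (le_trans (le_max_left _ _) hX₁)
        rw [Real.norm_eq_abs, Real.norm_eq_abs, abs_of_pos hXpos] at this
        exact this
      have hb2 : (∫ t in Set.Ioc T₁ X, |g' t * E t|)
          ≤ 0 * g T₁ + δ * K * ∫ t in T₁..X, g t := by
        refine hBnd δ 0 hδpos.le le_rfl T₁ X hT₁x₀ hX₁ ?_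
        intro t ht
        have htpos : 0 < t := lt_of_le_of_lt hT₁pos.le ht.1
        have := hT₀' t (le_trans (le_max_left _ _) ht.1.le)
        rw [Real.norm_eq_abs, Real.norm_eq_abs, abs_of_pos htpos] at this
        linarith
      have hsp := hsplitI T₁ X hT₁x₀ hX₁
      have hFb := hFbd X hXx₀
      have hkey' := hkey X hXx₀
      have hXgb := hXg X hXx₀
      have hIs : (∫ t in x₀..X, g t) = I X - I x₀ := by
        linarith [hIsplit x₀ X hrx₀.le hrX]
      have hIs2 : (∫ t in T₁..X, g t) = I X - I T₁ := by
        linarith [hIsplit T₁ X hrT₁ hrX]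
      rw [hIs2] at hb2
      have habs : |T X - c * I X| ≤ |K₀| + |F X| := by
        rw [hkey']
        exact abs_add_le _ _
      have hEXg : |E X| * g X ≤ δ * X * g X := mul_le_mul_of_nonneg_right hEX hgX.le
      have hXgb' : δ * (X * g X) ≤ δ * (x₀ * g x₀ + (I X - I x₀)) := by
        refine mul_le_mul_of_nonneg_left ?_ hδpos.le
        linarith
      have habsIx₀ : δ * (-(I x₀)) ≤ δ * |I x₀| :=
        mul_le_mul_of_nonneg_left (neg_le_abs (I x₀)) hδpos.le
      have habsIT₁ : (δ * K) * (-(I T₁)) ≤ (δ * K) * |I T₁| :=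
        mul_le_mul_of_nonneg_left (neg_le_abs (I T₁)) (mul_nonneg hδpos.le hK)
      have hδεI : δ * I X * (2 * (K + 1)) = ε * I X := by rw [← hδε]; ring
      rw [Real.norm_eq_abs, Real.norm_eq_abs, abs_of_nonneg hIX0]
      linarith [habs, hFb, hsp, hb1, hb2, hEXg, hXgb', habsIx₀, habsIT₁, hIs2, hCst, hδεI, hCstdef]
    · exact Asymptotics.isBigO_zero _ _
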